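/- Let G be a rectifiable space that is open π-nested at some point a ∈ G. Then G is open nested at every point; i.e., every point of G has a neighborhood base that is an open nest. -/

import Mathlib

/-- If a rectifiable space `G` is open π-nested at some point `a` (there is an
open nest, i.e. a chain of nonempty open sets, converging to `a`), then `G` is
open nested at every point: every point has a local base which is an open nest. -/
theorem rectifiable_open_pi_nested_implies_open_nested
    {G : Type*} [TopologicalSpace G] (e : G) (p q : G × G → G)
    (hp : Continuous p) (hq : Continuous q)
    (hpo : IsOpenMap p) (hqo : IsOpenMap q)
    (hpq : ∀ x y : G, p (x, q (x, y)) = y)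
    (hqp : ∀ x y : G, q (x, p (x, y)) = y)
    (hqe : ∀ x : G, q (x, x) = e)
    (a : G)
    (hnest : ∃ S : Set (Set G), S.Nonempty ∧
        (∀ U ∈ S, IsOpen U ∧ U.Nonempty) ∧ IsChain (· ⊆ ·) S ∧
        (∀ U : Set G, IsOpen U → a ∈ U → ∃ V ∈ S, V ⊆ U)) :
    ∀ x : G, ∃ S : Set (Set G),
        (∀ U ∈ S, IsOpen U ∧ x ∈ U) ∧ IsChain (· ⊆ ·) S ∧
        (∀ U : Set G, IsOpen U → x ∈ U → ∃ V ∈ S, V ⊆ U) := by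
  intro x
  obtain ⟨S, -, hSopen, hSchain, hSbase⟩ := hnest
  -- image under y ↦ p (x, y) equals preimage under y ↦ q (x, y)
  have himg : ∀ W : Set G, (fun y => p (x, y)) '' W = (fun y => q (x, y)) ⁻¹' W := by
    intro W
    ext z
    constructor
    · rintro ⟨w, hw, rfl⟩
      simpa [hqp] using hw
    · intro hz
      exact ⟨q (x, z), hz, hpq x z⟩
  have hgcont : Continuous (fun y : G => q (x, y)) := hq.comp (Continuous.prodMk_right x)
  have hfcont : Continuous (fun y : G => p (x, y)) := hp.comp (Continuous.prodMk_right x)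
  set F : Set G → Set G := fun U => (fun y => p (x, y)) '' (q '' (U ×ˢ U)) with hF
  have hmono : ∀ U V : Set G, U ⊆ V → F U ⊆ F V := fun U V h =>
    Set.image_mono (Set.image_mono (Set.prod_mono h h))
  refine ⟨F '' S, ?_, ?_, ?_⟩
  · rintro _ ⟨U, hU, rfl⟩
    obtain ⟨hUo, u, hu⟩ := hSopen U hU
    constructor
    · rw [hF]
      simp only [himg]
      exact IsOpen.preimage hgcont (hqo _ (hUo.prod hUo))
    · rw [hF]
      simp only [himg, Set.mem_preimage]
      rw [hqe x]
      exact ⟨(u, u), ⟨hu, hu⟩, hqe u⟩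
  · rintro _ ⟨U, hU, rfl⟩ _ ⟨V, hV, rfl⟩ -
    rcases hSchain.total hU hV with h | h
    · exact Or.inl (hmono _ _ h)
    · exact Or.inr (hmono _ _ h)
  · intro O hO hxO
    set O' : Set G := (fun y => p (x, y)) ⁻¹' O with hO'
    have hO'open : IsOpen O' := hO.preimage hfcont
    have heO' : e ∈ O' := by
      have hx : p (x, e) = x := by rw [← hqe x, hpq]
      simpa [hO', Set.mem_preimage, hx] using hxO
    have hqaa : (a, a) ∈ q ⁻¹' O' := by
      simp only [Set.mem_preimage, hqe]
      exact heO'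
    obtain ⟨A, B, hAo, hBo, haA, haB, hABsub⟩ :=
      (isOpen_prod_iff.mp (hO'open.preimage hq)) a a hqaa
    obtain ⟨U, hUS, hUsub⟩ := hSbase (A ∩ B) (hAo.inter hBo) ⟨haA, haB⟩
    refine ⟨F U, ⟨U, hUS, rfl⟩, ?_⟩
    rintro _ ⟨w, ⟨uv, huv, rfl⟩, rfl⟩
    exact hABsub ⟨(hUsub huv.1).1, (hUsub huv.2).2⟩
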